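/- The posterior predictive distribution of the next symbol satisfies P(x_{n+1}|x_{−D+1}^n) = Σ_{i=0}^{D} [(a_{s^{(i)}}(x_{n+1}) + 1/2)/(M_{s^{(i)}} + m/2)]·γ_i, where s^{(i)} is the context of length i preceding x_{n+1}, and γ_i is the posterior probability that s^{(i)} is a leaf: γ_0 = P_{b,λ}, γ_i = [Π_{k=0}^{i−1}(1−P_{b,s^{(k)}})]·P_{b,s^{(i)}} for 1 ≤ i ≤ D−1, and γ_D = Π_{k=0}^{D−1}(1−P_{b,s^{(k)}}). -/

import Mathlib

open MeasureTheory Filter Real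
open scoped Topology ENNReal Classical

noncomputable section

inductive MTree (m : ℕ) : Type
  | leaf : MTree m
  | node : (Fin m → MTree m) → MTree m

namespace MTree

variable {m : ℕ}

def depth : MTree m → ℕ
  | leaf => 0
  | node f => (Finset.univ.sup fun j => depth (f j)) + 1

def numLeaves : MTree m → ℕ
  | leaf => 1
  | node f => ∑ j, numLeaves (f j)

def leavesAtDepth : MTree m → ℕ → ℕ
  | leaf, 0 => 1
  | leaf, _ + 1 => 0
  | node _, 0 => 0
  | node f, d + 1 => ∑ j, leavesAtDepth (f j) d

def nodesAtDepth : MTree m → ℕ → ℕ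
  | _, 0 => 1
  | leaf, _ + 1 => 0
  | node f, d + 1 => ∑ j, nodesAtDepth (f j) d

end MTree

/-- The BCT prior `π_D(T;β) = α^{|T|-1} β^{|T|-L_D(T)}` with `α = (1-β)^{1/(m-1)}`. -/
def priorBCT (m D : ℕ) (β : ℝ) (T : MTree m) : ℝ :=
  ((1 - β) ^ (((m : ℝ) - 1)⁻¹)) ^ (T.numLeaves - 1) * β ^ (T.numLeaves - T.leavesAtDepth D)

/-- Probability that the Galton–Watson process with offspring distribution (β,1-β) on {0,m},
stopped at generation D, produces the tree `T`. -/
def gwStopped {m : ℕ} (β : ℝ) : ℕ → MTree m → ℝ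
  | 0, .leaf => 1
  | 0, .node _ => 0
  | _ + 1, .leaf => β
  | D + 1, .node f => (1 - β) * ∏ j, gwStopped β D (f j)


/-- The weighted probabilities `P_{w,s}`: with remaining depth budget 0 (i.e. at maximal
depth D), `P_{w,s} = P_{e,s}`; otherwise `P_{w,s} = β P_{e,s} + (1-β) ∏_j P_{w,sj}`. -/
def pw {m : ℕ} (β : ℝ) (Pe : List (Fin m) → ℝ) : ℕ → List (Fin m) → ℝ
  | 0, s => Pe s
  | D + 1, s => β * Pe s + (1 - β) * ∏ j, pw β Pe D (s ++ [j])

/-- The branching probabilities `P_{b,s} = β P_{e,s} / P_{w,s}` for contexts of length < D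
(positive remaining budget), with the convention `P_{b,s} = 1` at maximal depth. -/
def pb {m : ℕ} (β : ℝ) (Pe : List (Fin m) → ℝ) : ℕ → List (Fin m) → ℝ
  | 0, _ => 1
  | D + 1, s => β * Pe s / pw β Pe (D + 1) s

/-- `∏_{s ∈ T} P_{e,s}`: product of the estimated probabilities over the leaf contexts of
the tree `T` rooted at context `s`; this is the marginal likelihood `P(x|T)`. -/
def leafProd {m : ℕ} (Pe : List (Fin m) → ℝ) : List (Fin m) → MTree m → ℝ
  | s, .leaf => Pe s
  | s, .node f => ∏ j, leafProd Pe (s ++ [j]) (f j)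

/-- The Krichevsky–Trofimov estimated probability of a count vector. -/
def ktProb (m : ℕ) (a : Fin m → ℕ) : ℝ :=
  (∏ j, ∏ i ∈ Finset.range (a j), ((i : ℝ) + 1 / 2)) /
    ∏ i ∈ Finset.range (∑ j, a j), ((m : ℝ) / 2 + i)

/-- Count vector: the number of times symbol j follows context s (s listed with the most
recent symbol first) in the observations x_1,...,x_n of the sequence x. -/
def cntSeq {m : ℕ} (x : ℤ → Fin m) (n : ℕ) (s : List (Fin m)) (j : Fin m) : ℕ :=
  ((Finset.Icc (1 : ℤ) n).filter fun i =>
    x i = j ∧ ∀ k : Fin s.length, x (i - 1 - (k : ℤ)) = s.get k).card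

/-- The leaf context of the tree T determined by the past symbols w
(most recent symbol first). -/
def ctxW {m : ℕ} : MTree m → List (Fin m) → List (Fin m)
  | .leaf, _ => []
  | .node _, [] => []
  | .node f, a :: rest => a :: ctxW (f a) rest


namespace MTree

variable {m : ℕ}

lemma depth_le_zero : ∀ {T : MTree m}, T.depth ≤ 0 → T = leaf
  | leaf, _ => rfl
  | node f, h => by simp [depth] at h

def e0 : {T : MTree m // T.depth ≤ 0} ≃ Unit where
  toFun _ := Unit.unit
  invFun _ := ⟨leaf, le_refl _⟩
  left_inv := by rintro ⟨T, hT⟩; simp [depth_le_zero hT]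
  right_inv _ := rfl

def eS (D : ℕ) : {T : MTree m // T.depth ≤ D + 1} ≃
    (Unit ⊕ (Fin m → {T : MTree m // T.depth ≤ D})) where
  toFun := fun ⟨T, hT⟩ =>
    match T, hT with
    | leaf, _ => Sum.inl Unit.unit
    | node f, h => Sum.inr fun j => ⟨f j, by
        simp only [depth, add_le_add_iff_right] at h
        exact le_trans (Finset.le_sup (f := fun j => (f j).depth) (Finset.mem_univ j)) h⟩
  invFun := fun s =>
    match s with
    | Sum.inl _ => ⟨leaf, Nat.zero_le _⟩
    | Sum.inr g => ⟨node fun j => (g j).1, by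
        simp only [depth, add_le_add_iff_right, Finset.sup_le_iff]
        exact fun j _ => (g j).2⟩
  left_inv := by rintro ⟨(_ | f), hT⟩ <;> rfl
  right_inv := by rintro (⟨⟩ | g) <;> rfl

def treeFintype : (D : ℕ) → Fintype {T : MTree m // T.depth ≤ D}
  | 0 => Fintype.ofEquiv Unit e0.symm
  | D + 1 => letI := treeFintype D; Fintype.ofEquiv _ (eS D).symm

instance (D : ℕ) : Fintype {T : MTree m // T.depth ≤ D} := treeFintype D

instance : Unique {T : MTree m // T.depth ≤ 0} where
  default := ⟨leaf, le_refl _⟩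
  uniq := by rintro ⟨T, hT⟩; simp [depth_le_zero hT]


lemma one_le_numLeaves (hm : 1 ≤ m) : ∀ T : MTree m, 1 ≤ T.numLeaves
  | leaf => le_refl _
  | node f => by
      have : 1 ≤ (f ⟨0, hm⟩).numLeaves := one_le_numLeaves hm (f ⟨0, hm⟩)
      calc 1 ≤ (f ⟨0, hm⟩).numLeaves := this
        _ ≤ _ := Finset.single_le_sum (f := fun j => (f j).numLeaves)
              (fun _ _ => Nat.zero_le _) (Finset.mem_univ _)

lemma leavesAtDepth_le_numLeaves : ∀ (T : MTree m) (D : ℕ), T.leavesAtDepth D ≤ T.numLeaves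
  | leaf, 0 => le_refl _
  | leaf, _ + 1 => Nat.zero_le _
  | node _, 0 => Nat.zero_le _
  | node f, D + 1 => Finset.sum_le_sum fun j _ => leavesAtDepth_le_numLeaves (f j) D

lemma depth_node_le {f : Fin m → MTree m} {D : ℕ} (h : depth (node f) ≤ D + 1) (j : Fin m) :
    depth (f j) ≤ D := by
  simp only [depth, add_le_add_iff_right] at h
  exact le_trans (Finset.le_sup (f := fun j => (f j).depth) (Finset.mem_univ j)) h


end MTree

lemma sum_tree_zero {m : ℕ} (F : MTree m → ℝ) :
    ∑ T : {T : MTree m // T.depth ≤ 0}, F T.1 = F .leaf :=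
  Fintype.sum_unique _

lemma sum_tree_succ {m : ℕ} (D : ℕ) (F : MTree m → ℝ) :
    ∑ T : {T : MTree m // T.depth ≤ D + 1}, F T.1
      = F .leaf + ∑ f : Fin m → {T : MTree m // T.depth ≤ D}, F (.node fun j => (f j).1) := by
  rw [← Equiv.sum_comp (MTree.eS D).symm (fun T => F T.1)]
  rw [Fintype.sum_sum_type]
  simp [MTree.eS]


section GW

variable {m : ℕ} {β : ℝ}

lemma A_pow (hm : 2 ≤ m) (hβ : β ∈ Set.Ioo (0:ℝ) 1) :
    ((1 - β) ^ (((m : ℝ) - 1)⁻¹)) ^ (m - 1) = 1 - β := by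
  have h1 : (0:ℝ) ≤ 1 - β := by linarith [hβ.2]
  have h2 : ((m : ℝ) - 1) ≠ 0 := by
    have : (2:ℝ) ≤ m := by exact_mod_cast hm
    linarith
  rw [← Real.rpow_natCast ((1 - β) ^ (((m : ℝ) - 1)⁻¹)) (m - 1), ← Real.rpow_mul h1]
  have : ((m - 1 : ℕ) : ℝ) = (m : ℝ) - 1 := by
    have : 1 ≤ m := by omega
    push_cast [this]; ring
  rw [this, inv_mul_cancel₀ h2, Real.rpow_one]

lemma A_pos (hβ : β ∈ Set.Ioo (0:ℝ) 1) : 0 < (1 - β) ^ (((m : ℝ) - 1)⁻¹) :=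
  Real.rpow_pos_of_pos (by linarith [hβ.2]) _

lemma gw_mul (hm : 2 ≤ m) (hβ : β ∈ Set.Ioo (0:ℝ) 1) :
    ∀ (T : MTree m) (D : ℕ), T.depth ≤ D →
      gwStopped β D T * ((1 - β) ^ (((m : ℝ) - 1)⁻¹)) * β ^ (T.leavesAtDepth D)
        = ((1 - β) ^ (((m : ℝ) - 1)⁻¹)) ^ T.numLeaves * β ^ T.numLeaves
  | .leaf, 0, _ => by
      simp [gwStopped, MTree.leavesAtDepth, MTree.numLeaves]
  | .leaf, D + 1, _ => by
      simp [gwStopped, MTree.leavesAtDepth, MTree.numLeaves]; ring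
  | .node f, 0, h => by simp [MTree.depth] at h
  | .node f, D + 1, h => by
      set A := (1 - β) ^ (((m : ℝ) - 1)⁻¹) with hA
      have IH : ∀ j, gwStopped β D (f j) * A * β ^ ((f j).leavesAtDepth D)
          = A ^ (f j).numLeaves * β ^ (f j).numLeaves :=
        fun j => gw_mul hm hβ (f j) D (MTree.depth_node_le h j)
      have hm1 : 1 ≤ m := by omega
      have key : ∏ j, (gwStopped β D (f j) * A * β ^ ((f j).leavesAtDepth D))
          = ∏ j, (A ^ (f j).numLeaves * β ^ (f j).numLeaves) :=
        Finset.prod_congr rfl fun j _ => IH j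
      simp only [Finset.prod_mul_distrib, Finset.prod_const, Finset.card_univ,
        Fintype.card_fin, Finset.prod_pow_eq_pow_sum] at key
      show (1 - β) * (∏ j, gwStopped β D (f j)) * A * β ^ ((MTree.node f).leavesAtDepth (D+1))
          = A ^ (MTree.node f).numLeaves * β ^ (MTree.node f).numLeaves
      have hlad : (MTree.node f).leavesAtDepth (D+1) = ∑ j, (f j).leavesAtDepth D := rfl
      have hnl : (MTree.node f).numLeaves = ∑ j, (f j).numLeaves := rfl
      rw [hlad, hnl, ← A_pow hm hβ, ← hA, ← key]
      have hmpos : A ^ (m - 1) * A = A ^ m := by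
        rw [← pow_succ]; congr 1; omega
      calc A ^ (m-1) * (∏ j, gwStopped β D (f j)) * A * β ^ (∑ j, (f j).leavesAtDepth D)
          = (A ^ (m-1) * A) * ((∏ j, gwStopped β D (f j)) * β ^ (∑ j, (f j).leavesAtDepth D)) := by ring
        _ = A ^ m * ((∏ j, gwStopped β D (f j)) * β ^ (∑ j, (f j).leavesAtDepth D)) := by rw [hmpos]
        _ = (∏ j, gwStopped β D (f j)) * A ^ m * β ^ (∑ j, (f j).leavesAtDepth D) := by ring

lemma prior_eq_gw (hm : 2 ≤ m) (hβ : β ∈ Set.Ioo (0:ℝ) 1) (D : ℕ) (T : MTree m)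
    (hT : T.depth ≤ D) : priorBCT m D β T = gwStopped β D T := by
  set A := (1 - β) ^ (((m : ℝ) - 1)⁻¹) with hA
  have hApos := A_pos (m := m) hβ
  have hβpos := hβ.1
  have h1 := gw_mul hm hβ T D hT
  have hL := MTree.one_le_numLeaves (by omega) T
  have hl := MTree.leavesAtDepth_le_numLeaves T D
  rw [priorBCT, ← hA]
  rw [pow_sub₀ A (ne_of_gt hApos) hL, pow_sub₀ β (ne_of_gt hβpos) hl]
  rw [pow_one]
  field_simp
  rw [← hA] at h1 hApos
  have key : A ^ T.numLeaves * β ^ T.numLeaves / A = β ^ T.leavesAtDepth D * gwStopped β D T := by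
    rw [div_eq_iff (ne_of_gt hApos)]; linarith [h1]
  linarith [h1, key]

end GW

section Main
variable {m : ℕ} {β : ℝ} {Pe : List (Fin m) → ℝ}

lemma ktProb_pos (hm : 2 ≤ m) (a : Fin m → ℕ) : 0 < ktProb m a := by
  apply div_pos
  · exact Finset.prod_pos fun j _ => Finset.prod_pos fun i _ => by positivity
  · exact Finset.prod_pos fun i _ => by
      have : (0:ℝ) < m := by positivity
      positivity

lemma pw_pos (hβ : β ∈ Set.Ioo (0:ℝ) 1) (hPe : ∀ s, 0 < Pe s) :
    ∀ (D : ℕ) (s : List (Fin m)), 0 < pw β Pe D s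
  | 0, s => hPe s
  | D + 1, s => by
      have h1 : 0 < β * Pe s := mul_pos hβ.1 (hPe s)
      have h2 : 0 < (1 - β) * ∏ j, pw β Pe D (s ++ [j]) :=
        mul_pos (by linarith [hβ.2]) (Finset.prod_pos fun j _ => pw_pos hβ hPe D _)
      show 0 < β * Pe s + (1 - β) * ∏ j, pw β Pe D (s ++ [j])
      linarith

lemma sum_gw_leafProd (hβ : β ∈ Set.Ioo (0:ℝ) 1) :
    ∀ (D : ℕ) (s : List (Fin m)),
      ∑ T : {T : MTree m // T.depth ≤ D}, gwStopped β D T.1 * leafProd Pe s T.1 = pw β Pe D s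
  | 0, s => by
      rw [sum_tree_zero (fun T => gwStopped β 0 T * leafProd Pe s T)]
      simp [gwStopped, leafProd, pw]
  | D + 1, s => by
      rw [sum_tree_succ D (fun T => gwStopped β (D+1) T * leafProd Pe s T)]
      have h1 : gwStopped β (D+1) (.leaf : MTree m) * leafProd Pe s .leaf = β * Pe s := rfl
      rw [h1]
      have h2 : ∀ f : Fin m → {T : MTree m // T.depth ≤ D},
          gwStopped β (D+1) (.node fun j => (f j).1) * leafProd Pe s (.node fun j => (f j).1)
            = (1 - β) * ∏ j, (gwStopped β D (f j).1 * leafProd Pe (s ++ [j]) (f j).1) := by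
        intro f
        show (1 - β) * (∏ j, gwStopped β D (f j).1) * ∏ j, leafProd Pe (s ++ [j]) (f j).1
            = (1 - β) * ∏ j, (gwStopped β D (f j).1 * leafProd Pe (s ++ [j]) (f j).1)
        rw [Finset.prod_mul_distrib]; ring
      simp only [h2, ← Finset.mul_sum]
      have h3 : ∑ f : Fin m → {T : MTree m // T.depth ≤ D},
          ∏ j, (gwStopped β D (f j).1 * leafProd Pe (s ++ [j]) (f j).1)
          = ∏ j, ∑ T : {T : MTree m // T.depth ≤ D},
              (gwStopped β D T.1 * leafProd Pe (s ++ [j]) T.1) := by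
        rw [← Fintype.piFinset_univ]
        exact Finset.sum_prod_piFinset Finset.univ
          (fun j (T : {T : MTree m // T.depth ≤ D}) =>
            gwStopped β D T.1 * leafProd Pe (s ++ [j]) T.1)
      rw [h3]
      have h4 : ∀ j : Fin m, ∑ T : {T : MTree m // T.depth ≤ D},
          (gwStopped β D T.1 * leafProd Pe (s ++ [j]) T.1) = pw β Pe D (s ++ [j]) :=
        fun j => sum_gw_leafProd hβ D (s ++ [j])
      simp only [h4]
      rfl


lemma key_lemma (hβ : β ∈ Set.Ioo (0:ℝ) 1) (hPe : ∀ s, 0 < Pe s) (g : List (Fin m) → ℝ) :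
    ∀ (D : ℕ) (s : List (Fin m)) (w : ℕ → Fin m),
    ∑ T : {T : MTree m // T.depth ≤ D},
      gwStopped β D T.1 * leafProd Pe s T.1 * g (s ++ ctxW T.1 (List.ofFn fun k : Fin D => w k))
    = ∑ i ∈ Finset.range (D+1),
        g (s ++ List.ofFn fun k : Fin i => w k) *
          ((∏ k ∈ Finset.range i, (1 - pb β Pe (D - k) (s ++ List.ofFn fun l : Fin k => w l))) *
            pb β Pe (D - i) (s ++ List.ofFn fun l : Fin i => w l)) * pw β Pe D s
  | 0, s, w => by
      rw [sum_tree_zero (fun T => gwStopped β 0 T * leafProd Pe s T *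
        g (s ++ ctxW T (List.ofFn fun k : Fin 0 => w k)))]
      simp [gwStopped, leafProd, pw, pb, ctxW, mul_comm]
  | D + 1, s, w => by
      have hpwpos := pw_pos hβ hPe
      set w' : ℕ → Fin m := fun u => w (u + 1) with hw'
      set t : ℕ → List (Fin m) := fun k => (s ++ [w 0]) ++ List.ofFn (fun l : Fin k => w' l)
        with ht
      have hctx : ∀ k : ℕ, s ++ List.ofFn (fun l : Fin (k+1) => w l) = t k := by
        intro k
        simp only [ht, hw']
        rw [List.ofFn_succ, List.append_cons]
        simp
      have hofn : (List.ofFn fun k : Fin (D+1) => w k)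
          = w 0 :: List.ofFn fun k : Fin D => w' k := by
        simp only [hw']
        rw [List.ofFn_succ]
        simp
      -- LHS computation
      rw [sum_tree_succ (m := m) D (fun T => gwStopped β (D+1) T * leafProd Pe s T *
        g (s ++ ctxW T (List.ofFn fun k : Fin (D+1) => w k)))]
      have hleaf : gwStopped β (D+1) (.leaf : MTree m) * leafProd Pe s .leaf *
          g (s ++ ctxW .leaf (List.ofFn fun k : Fin (D+1) => w k)) = β * Pe s * g s := by
        simp [gwStopped, leafProd, ctxW]
      rw [hleaf]
      have hnode : ∀ f : Fin m → {T : MTree m // T.depth ≤ D},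
          gwStopped β (D+1) (.node fun j => (f j).1) * leafProd Pe s (.node fun j => (f j).1) *
            g (s ++ ctxW (.node fun j => (f j).1) (List.ofFn fun k : Fin (D+1) => w k))
          = (1 - β) * ∏ j, (gwStopped β D (f j).1 * leafProd Pe (s ++ [j]) (f j).1 *
              (if j = w 0 then
                g ((s ++ [w 0]) ++ ctxW (f j).1 (List.ofFn fun k : Fin D => w' k)) else 1)) := by
        intro f
        rw [hofn]
        have hctxnode : ctxW (.node fun j => (f j).1)
            (w 0 :: List.ofFn fun k : Fin D => w' k)
            = w 0 :: ctxW (f (w 0)).1 (List.ofFn fun k : Fin D => w' k) := rfl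
        rw [hctxnode]
        have hgw : gwStopped β (D+1) (.node fun j => (f j).1)
            = (1 - β) * ∏ j, gwStopped β D (f j).1 := rfl
        have hlp : leafProd Pe s (.node fun j => (f j).1)
            = ∏ j, leafProd Pe (s ++ [j]) (f j).1 := rfl
        rw [hgw, hlp, Finset.prod_mul_distrib, Finset.prod_mul_distrib,
          Finset.prod_ite_eq' Finset.univ (w 0)
            (fun j => g ((s ++ [w 0]) ++ ctxW (f j).1 (List.ofFn fun k : Fin D => w' k)))]
        rw [if_pos (Finset.mem_univ _), List.append_cons]
        ring
      simp only [hnode, ← Finset.mul_sum]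
      rw [← Fintype.piFinset_univ]
      rw [Finset.sum_prod_piFinset Finset.univ
        (fun j (T : {T : MTree m // T.depth ≤ D}) =>
          gwStopped β D T.1 * leafProd Pe (s ++ [j]) T.1 *
            (if j = w 0 then
              g ((s ++ [w 0]) ++ ctxW T.1 (List.ofFn fun k : Fin D => w' k)) else 1))]
      rw [Fintype.prod_eq_mul_prod_compl (w 0)]
      have hw0sum : ∑ T : {T : MTree m // T.depth ≤ D},
          gwStopped β D T.1 * leafProd Pe (s ++ [w 0]) T.1 *
            (if w 0 = w 0 then
              g ((s ++ [w 0]) ++ ctxW T.1 (List.ofFn fun k : Fin D => w' k)) else 1)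
          = (∑ i ∈ Finset.range (D+1),
              g (t i) * ((∏ k ∈ Finset.range i, (1 - pb β Pe (D - k) (t k))) *
                pb β Pe (D - i) (t i))) * pw β Pe D (s ++ [w 0]) := by
        simp only [if_pos rfl]
        rw [Finset.sum_mul]
        exact key_lemma hβ hPe g D (s ++ [w 0]) w'
      rw [hw0sum]
      have hcompl : ∀ j ∈ ({w 0}ᶜ : Finset (Fin m)),
          (∑ T : {T : MTree m // T.depth ≤ D},
            gwStopped β D T.1 * leafProd Pe (s ++ [j]) T.1 *
              (if j = w 0 then
                g ((s ++ [w 0]) ++ ctxW T.1 (List.ofFn fun k : Fin D => w' k)) else 1))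
          = pw β Pe D (s ++ [j]) := by
        intro j hj
        rw [Finset.mem_compl, Finset.mem_singleton] at hj
        simp only [if_neg hj, mul_one]
        exact sum_gw_leafProd hβ D (s ++ [j])
      rw [Finset.prod_congr rfl hcompl]
      -- RHS computation
      have hterm0 : g (s ++ List.ofFn fun k : Fin 0 => w k) *
          ((∏ k ∈ Finset.range 0, (1 - pb β Pe (D + 1 - k) (s ++ List.ofFn fun l : Fin k => w l))) *
            pb β Pe (D + 1 - 0) (s ++ List.ofFn fun l : Fin 0 => w l)) * pw β Pe (D+1) s
          = β * Pe s * g s := by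
        simp only [List.ofFn_zero, List.append_nil, Finset.range_zero, Finset.prod_empty,
          one_mul, Nat.sub_zero]
        rw [pb, mul_assoc, div_mul_cancel₀ _ (ne_of_gt (hpwpos (D+1) s))]
        ring
      have hpbpw : (1 - pb β Pe (D+1) s) * pw β Pe (D+1) s
          = (1 - β) * ∏ j, pw β Pe D (s ++ [j]) := by
        rw [pb, sub_mul, one_mul, div_mul_cancel₀ _ (ne_of_gt (hpwpos (D+1) s))]
        rw [pw]
        ring
      have hstep : ∀ i ∈ Finset.range (D+1),
          g (s ++ List.ofFn fun k : Fin (i+1) => w k) *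
            ((∏ k ∈ Finset.range (i+1),
                (1 - pb β Pe (D + 1 - k) (s ++ List.ofFn fun l : Fin k => w l))) *
              pb β Pe (D + 1 - (i+1)) (s ++ List.ofFn fun l : Fin (i+1) => w l)) * pw β Pe (D+1) s
          = (g (t i) * ((∏ k ∈ Finset.range i, (1 - pb β Pe (D - k) (t k))) *
              pb β Pe (D - i) (t i))) *
            ((1 - pb β Pe (D+1) s) * pw β Pe (D+1) s) := by
        intro i _
        rw [Finset.prod_range_succ']
        have hps : ∀ k, (1 - pb β Pe (D + 1 - (k+1)) (s ++ List.ofFn fun l : Fin (k+1) => w l))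
            = (1 - pb β Pe (D - k) (t k)) := by
          intro k
          rw [hctx k]
          congr 2
          omega
        simp only [hps]
        rw [hctx i]
        have hdi : D + 1 - (i + 1) = D - i := by omega
        rw [hdi]
        simp only [List.ofFn_zero, List.append_nil, Nat.sub_zero]
        ring
      have hRHS : (∑ i ∈ Finset.range (D+1+1),
          g (s ++ List.ofFn fun k : Fin i => w k) *
            ((∏ k ∈ Finset.range i,
                (1 - pb β Pe (D + 1 - k) (s ++ List.ofFn fun l : Fin k => w l))) *
              pb β Pe (D + 1 - i) (s ++ List.ofFn fun l : Fin i => w l)) * pw β Pe (D+1) s)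
          = β * Pe s * g s +
            (∑ i ∈ Finset.range (D+1),
              g (t i) * ((∏ k ∈ Finset.range i, (1 - pb β Pe (D - k) (t k))) *
                pb β Pe (D - i) (t i))) * ((1 - β) * ∏ j, pw β Pe D (s ++ [j])) := by
        rw [Finset.sum_range_succ', hterm0, Finset.sum_congr rfl hstep, ← Finset.sum_mul, hpbpw]
        ring
      rw [hRHS]
      rw [Fintype.prod_eq_mul_prod_compl (w 0) (fun j => pw β Pe D (s ++ [j]))]
      ring

end Main


/-- the posterior predictive distribution
P(x_{n+1}|x) = sum_T pi(T|x) P(x_{n+1}|T,x) equals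
sum_{i=0}^D [(a_{s^(i)}(x_{n+1}) + 1/2)/(M_{s^(i)} + m/2)] * gamma_i,
where s^(i) is the context of length i preceding x_{n+1} and gamma_i is the posterior
probability that s^(i) is a leaf, expressed via the branching probabilities P_{b,s}
(with the convention that the branching probability is 1 at depth D, i.e. budget 0). -/
theorem posterior_predictive {m : ℕ} (hm : 2 ≤ m) (D : ℕ) (β : ℝ)
    (hβ : β ∈ Set.Ioo (0 : ℝ) 1) (x : ℤ → Fin m) (n : ℕ) :
    (∑' T : {T : MTree m // T.depth ≤ D},
      (priorBCT m D β T.1 * leafProd (fun s => ktProb m (cntSeq x n s)) [] T.1 /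
          pw β (fun s => ktProb m (cntSeq x n s)) D []) *
        ((cntSeq x n (ctxW T.1 (List.ofFn fun k : Fin D => x ((n : ℤ) - k))) (x ((n : ℤ) + 1)) +
            1 / 2 : ℝ) /
          ((∑ j, cntSeq x n (ctxW T.1 (List.ofFn fun k : Fin D => x ((n : ℤ) - k))) j : ℕ) +
            (m : ℝ) / 2))) =
    ∑ i ∈ Finset.range (D + 1),
      ((cntSeq x n (List.ofFn fun k : Fin i => x ((n : ℤ) - k)) (x ((n : ℤ) + 1)) +
          1 / 2 : ℝ) /
        ((∑ j, cntSeq x n (List.ofFn fun k : Fin i => x ((n : ℤ) - k)) j : ℕ) + (m : ℝ) / 2)) *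
      ((∏ k ∈ Finset.range i,
          (1 - pb β (fun s => ktProb m (cntSeq x n s)) (D - k)
            (List.ofFn fun l : Fin k => x ((n : ℤ) - l)))) *
        pb β (fun s => ktProb m (cntSeq x n s)) (D - i)
          (List.ofFn fun l : Fin i => x ((n : ℤ) - l))) := by
  set Pe : List (Fin m) → ℝ := fun s => ktProb m (cntSeq x n s) with hPeDef
  have hPe : ∀ s, 0 < Pe s := fun s => ktProb_pos hm _
  set g : List (Fin m) → ℝ := fun u =>
    ((cntSeq x n u (x ((n : ℤ) + 1)) : ℝ) + 1 / 2) /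
      ((∑ j, cntSeq x n u j : ℕ) + (m : ℝ) / 2) with hgDef
  set w : ℕ → Fin m := fun k => x ((n : ℤ) - (k : ℤ)) with hwDef
  have hpw := pw_pos hβ hPe D ([] : List (Fin m))
  rw [tsum_fintype]
  have hterm : ∀ T : {T : MTree m // T.depth ≤ D},
      (priorBCT m D β T.1 * leafProd Pe [] T.1 / pw β Pe D []) *
        ((cntSeq x n (ctxW T.1 (List.ofFn fun k : Fin D => x ((n : ℤ) - k))) (x ((n : ℤ) + 1)) +
            1 / 2 : ℝ) /
          ((∑ j, cntSeq x n (ctxW T.1 (List.ofFn fun k : Fin D => x ((n : ℤ) - k))) j : ℕ) +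
            (m : ℝ) / 2))
      = (gwStopped β D T.1 * leafProd Pe [] T.1 *
          g ([] ++ ctxW T.1 (List.ofFn fun k : Fin D => w k))) * (pw β Pe D [])⁻¹ := by
    intro T
    rw [prior_eq_gw hm hβ D T.1 T.2]
    rw [List.nil_append]
    rw [div_mul_eq_mul_div, div_eq_mul_inv]
  rw [Finset.sum_congr rfl fun T _ => hterm T]
  rw [← Finset.sum_mul]
  rw [key_lemma hβ hPe g D [] w]
  rw [← Finset.sum_mul, mul_assoc, mul_inv_cancel₀ (ne_of_gt hpw), mul_one]
  refine Finset.sum_congr rfl fun i _ => ?_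
  rw [List.nil_append]
  rfl

end
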